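/- The equilibrium value vector is unique: if v and w are both vectors in ℝ^n satisfying T(v) = v and T(w) = w, then v = w. -/

import Mathlib

open Finset Filter

/-- The value-update map of the trading network model:
`T_i(v) = -c_i + max{ max_{j ∈ N(i)} (π_{ij} v_i + (1-π_{ij}) v_j), u_i }`. -/
noncomputable def T {n : ℕ} (N : Fin n → Finset (Fin n)) (hN : ∀ i, (N i).Nonempty)
    (c u : Fin n → ℝ) (π : Fin n → Fin n → ℝ) (v : Fin n → ℝ) (i : Fin n) : ℝ :=
  -c i + max ((N i).sup' (hN i) fun j => π i j * v i + (1 - π i j) * v j) (u i)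

lemma equilibrium_le {n : ℕ} (hn : 1 ≤ n)
    (N : Fin n → Finset (Fin n)) (hN : ∀ i, (N i).Nonempty)
    (c u : Fin n → ℝ) (π : Fin n → Fin n → ℝ)
    (hc : ∀ i, 0 < c i) (hπ : ∀ i j, π i j ∈ Set.Ioo (0 : ℝ) 1)
    (v w : Fin n → ℝ) (hv : T N hN c u π v = v) (hw : T N hN c u π w = w) :
    ∀ i, v i ≤ w i := by
  have hne : (Finset.univ : Finset (Fin n)).Nonempty := ⟨⟨0, hn⟩, mem_univ _⟩
  set M : ℝ := Finset.univ.sup' hne (fun i => v i - w i) with hM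
  have hMle : ∀ i, v i - w i ≤ M := fun i => le_sup' (fun k => v k - w k) (mem_univ i)
  suffices hM0 : M ≤ 0 by
    intro i; have := hMle i; linarith
  by_contra hpos
  push_neg at hpos
  -- set of maximizers
  set S : Finset (Fin n) := Finset.univ.filter (fun i => v i - w i = M) with hS
  have hSne : S.Nonempty := by
    obtain ⟨i0, _, h0⟩ := Finset.exists_mem_eq_sup' hne (fun i => v i - w i)
    exact ⟨i0, by simp [hS, h0.symm, hM]⟩
  obtain ⟨i, hiS, hiMax⟩ := S.exists_max_image v hSne
  have hiM : v i - w i = M := (Finset.mem_filter.mp hiS).2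
  have hvi := congrFun hv i
  have hwi := congrFun hw i
  unfold T at hvi hwi
  set Av := (N i).sup' (hN i) (fun j => π i j * v i + (1 - π i j) * v j) with hAv
  set Aw := (N i).sup' (hN i) (fun j => π i j * w i + (1 - π i j) * w j) with hAw
  have hwi' : -c i + u i ≤ w i := by
    have := le_max_right Aw (u i); linarith [hwi]
  have h1 : v i = -c i + Av := by
    rcases max_cases Av (u i) with ⟨he, _⟩ | ⟨he, hlt⟩
    · linarith [hvi, he]
    · exfalso
      have : v i = -c i + u i := by rw [← hvi, he]
      have : v i - w i ≤ 0 := by linarith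
      linarith [hiM]
  obtain ⟨j, hjN, hj⟩ := Finset.exists_mem_eq_sup' (hN i)
    (fun j => π i j * v i + (1 - π i j) * v j)
  have hjw : π i j * w i + (1 - π i j) * w j ≤ Aw :=
    le_sup' (fun j => π i j * w i + (1 - π i j) * w j) hjN
  have hwge : -c i + (π i j * w i + (1 - π i j) * w j) ≤ w i := by
    have := le_max_left Aw (u i); linarith [hwi]
  obtain ⟨hp0, hp1⟩ := hπ i j
  -- v i - w i ≤ π (v i - w i) + (1-π)(v j - w j)
  have hj' : Av = π i j * v i + (1 - π i j) * v j := hAv.trans hj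
  have h2 : v i = -c i + (π i j * v i + (1 - π i j) * v j) := by
    rw [hj'] at h1; exact h1
  have hkey : v i - w i ≤ π i j * (v i - w i) + (1 - π i j) * (v j - w j) := by
    nlinarith [hwge]
  have hMj : v j - w j = M := by
    have hle := hMle j
    have : (1 - π i j) * (M - (v j - w j)) ≤ 0 := by nlinarith [hiM, hkey]
    nlinarith
  have hjS : j ∈ S := Finset.mem_filter.mpr ⟨mem_univ j, hMj⟩
  have hvij : v i < v j := by
    nlinarith [hc i]
  exact absurd (hiMax j hjS) (not_le.mpr hvij)

/-- Uniqueness of the equilibrium value vector. -/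
theorem equilibrium_unique {n : ℕ} (hn : 1 ≤ n)
    (N : Fin n → Finset (Fin n)) (hN : ∀ i, (N i).Nonempty)
    (c u : Fin n → ℝ) (π : Fin n → Fin n → ℝ)
    (hc : ∀ i, 0 < c i) (hπ : ∀ i j, π i j ∈ Set.Ioo (0 : ℝ) 1)
    (v w : Fin n → ℝ) (hv : T N hN c u π v = v) (hw : T N hN c u π w = w) :
    v = w := by
  funext i
  exact le_antisymm (equilibrium_le hn N hN c u π hc hπ v w hv hw i)
    (equilibrium_le hn N hN c u π hc hπ w v hw hv i)
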